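/- The statement 'if f ∈ S and φ(E(u))^N · f ∈ 𝔖 + p^N S for all N ≥ 0, then f ∈ 𝔖' is false: the element f = E(u)^p/p ∈ S is a counterexample, i.e., f ∈ S, f ∉ 𝔖, yet φ(E(u))^N · f ∈ 𝔖 + p^N S for every N ≥ 0. -/

import Mathlib

/-- With `𝔖 = 𝒪_{K₀}[[u]]` (realized as the image of `(𝒪_{K₀})[[u]]` inside
`K₀[[u]]`), `E(u)` an Eisenstein (monic, with non-unit constant term divisible by `p`)
polynomial, `S ⊂ K₀[[u]]` the `p`-adic completion of the PD-envelope of `𝒪_{K₀}[u]` along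
`(E(u))` (so `S` contains `𝔖` and all divided powers `E(u)^i/i!`), and `φ` the Frobenius
(with `φ(E) ≡ E^p mod p𝔖`), the statement
"if `f ∈ S` and `φ(E(u))^N · f ∈ 𝔖 + p^N S` for all `N ≥ 0`, then `f ∈ 𝔖`"
is false: the element `f = E(u)^p/p ∈ S` is a counterexample, i.e. `f ∈ S`, `f ∉ 𝔖`,
yet `φ(E(u))^N · f ∈ 𝔖 + p^N S` for every `N ≥ 0`. -/
theorem stmt2
    {O : Type*} [CommRing O] [IsDomain O]
    (K₀ : Type*) [Field K₀] [Algebra O K₀] [IsFractionRing O K₀]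
    (p : ℕ) (hp : p.Prime) (hpO : ¬ IsUnit (p : O)) (hp0 : (p : O) ≠ 0)
    (E : Polynomial O) (hE : E.Monic)
    (hEis : E.IsEisensteinAt (Ideal.span {(p : O)}))
    (𝔖 : Subring (PowerSeries K₀))
    (h𝔖 : 𝔖 = (PowerSeries.map (algebraMap O K₀)).range)
    (Ek : PowerSeries K₀)
    (hEk : Ek = PowerSeries.map (algebraMap O K₀) (PowerSeries.mk fun n => E.coeff n))
    (S : Subring (PowerSeries K₀))
    (hS𝔖 : 𝔖 ≤ S)
    -- `S` contains all divided powers `E^i/i!` :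
    (hSdiv : ∀ i : ℕ, ((Nat.factorial i : K₀)⁻¹ • (Ek ^ i)) ∈ S)
    (φ : PowerSeries K₀ →+* PowerSeries K₀)
    -- `φ(E) ≡ E^p` modulo `p·𝔖` :
    (hφE : ∃ c ∈ 𝔖, φ Ek = Ek ^ p + (p : PowerSeries K₀) * c) :
    (((p : K₀)⁻¹ • (Ek ^ p)) ∈ S) ∧
    (((p : K₀)⁻¹ • (Ek ^ p)) ∉ 𝔖) ∧
    (∀ N : ℕ, ∃ g ∈ 𝔖, ∃ s ∈ S,
      (φ Ek) ^ N * ((p : K₀)⁻¹ • (Ek ^ p)) = g + (p : PowerSeries K₀) ^ N * s) := by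
  have hinj : Function.Injective (algebraMap O K₀) := IsFractionRing.injective O K₀
  -- `O` has characteristic zero
  haveI : CharZero O := by
    rcases CharP.char_is_prime_or_zero O (ringChar O) with hq | hq
    · exfalso
      haveI := Fact.mk hq
      haveI : CharP O (ringChar O) := ringChar.charP O
      by_cases hqp : ringChar O = p
      · exact hp0 (by rw [← hqp]; exact CharP.cast_eq_zero O (ringChar O))
      · have hz : ((p : ZMod (ringChar O)) ≠ 0) := by
          rw [Ne, ZMod.natCast_eq_zero_iff]
          intro hdvd
          exact hqp ((Nat.prime_dvd_prime_iff_eq hq hp).mp hdvd)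
        have hu : IsUnit ((p : ZMod (ringChar O))) := isUnit_iff_ne_zero.mpr hz
        have := hu.map (ZMod.castHom dvd_rfl O)
        rw [map_natCast] at this
        exact hpO this
    · haveI : CharP O 0 := hq ▸ ringChar.charP O
      exact CharP.charP_to_charZero O
  haveI : CharZero K₀ := charZero_of_injective_algebraMap hinj
  have hpK : (p : K₀) ≠ 0 := Nat.cast_ne_zero.mpr hp.pos.ne'
  set f : PowerSeries K₀ := (p : K₀)⁻¹ • (Ek ^ p) with hf
  have hpf : (p : PowerSeries K₀) * f = Ek ^ p := by
    rw [hf, Algebra.smul_def]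
    have : (p : PowerSeries K₀) = algebraMap K₀ (PowerSeries K₀) (p : K₀) := by
      simp
    rw [this, ← mul_assoc, ← map_mul, mul_inv_cancel₀ hpK, map_one, one_mul]
  -- part 1
  have h1 : f ∈ S := by
    have key : f = (p - 1).factorial • (((p.factorial : K₀))⁻¹ • (Ek ^ p)) := by
      rw [← Nat.cast_smul_eq_nsmul K₀, smul_smul, hf]
      congr 1
      have hfac : (p.factorial : K₀) = (p : K₀) * ((p - 1).factorial : K₀) := by
        rw [← Nat.cast_mul, Nat.mul_factorial_pred hp.ne_zero]
      have h1 : ((p - 1).factorial : K₀) ≠ 0 :=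
        Nat.cast_ne_zero.mpr (Nat.factorial_ne_zero _)
      rw [hfac]
      field_simp
    rw [key]
    exact nsmul_mem (hSdiv p) _
  -- part 2
  have hEkcoe : Ek = ((E.map (algebraMap O K₀) : Polynomial K₀) : PowerSeries K₀) := by
    ext n
    simp [hEk, Polynomial.coeff_coe]
  have h2 : f ∉ 𝔖 := by
    intro hmem
    rw [h𝔖] at hmem
    obtain ⟨g, hg⟩ := hmem
    set d : Polynomial K₀ := E.map (algebraMap O K₀) with hd
    have hdm : (d ^ p).Monic := (hE.map (algebraMap O K₀)).pow p
    set n : ℕ := (d ^ p).natDegree with hn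
    have hcoef : PowerSeries.coeff n f = (p : K₀)⁻¹ := by
      rw [hf, map_smul, hEkcoe, ← Polynomial.coe_pow, smul_eq_mul,
        Polynomial.coeff_coe, hdm.coeff_natDegree, mul_one]
    have : algebraMap O K₀ (PowerSeries.coeff n g) = (p : K₀)⁻¹ := by
      rw [← hcoef, ← hg, PowerSeries.coeff_map]
    have hx : (PowerSeries.coeff n g) * (p : O) = 1 := by
      apply hinj
      rw [map_mul, map_one, this, map_natCast, inv_mul_cancel₀ hpK]
    exact hpO (IsUnit.of_mul_eq_one _ ((mul_comm _ _).trans hx))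
  refine ⟨h1, h2, ?_⟩
  -- part 3
  obtain ⟨c, hc, hφ⟩ := hφE
  have hEk𝔖 : Ek ∈ 𝔖 := by
    rw [h𝔖]; exact ⟨_, hEk.symm⟩
  have hEkp𝔖 : Ek ^ p ∈ 𝔖 := pow_mem hEk𝔖 p
  intro N
  set A : 𝔖 := ⟨Ek ^ p, hEkp𝔖⟩ with hA
  set C : 𝔖 := ⟨c, hc⟩ with hC
  have hdvd : (p : 𝔖) ∣ ((A + (p : 𝔖) * C) ^ N - A ^ N) :=
    dvd_trans ⟨C, rfl⟩ (by simpa using sub_dvd_pow_sub_pow (A + (p : 𝔖) * C) A N)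
  obtain ⟨D, hD⟩ := hdvd
  have hDcoe : (Ek ^ p + (p : PowerSeries K₀) * c) ^ N
      = (Ek ^ p) ^ N + (p : PowerSeries K₀) * (D : PowerSeries K₀) := by
    have := congrArg (fun x : 𝔖 => (x : PowerSeries K₀)) hD
    push_cast at this
    linear_combination this
  refine ⟨(D : PowerSeries K₀) * (Ek ^ p), mul_mem D.2 hEkp𝔖, f ^ (N + 1),
    pow_mem h1 (N + 1), ?_⟩
  rw [hφ, hDcoe, ← hpf]
  ring
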